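/- Let G be a finite solvable group. Then any two non-isolated vertices of Γ(G) are joined by a path in Γ(G); equivalently, the deleted co-maximal subgroup graph Γ*(G) is connected. -/

import Mathlib

open scoped Pointwise
open scoped commutatorElement

/-- The co-maximal subgroup graph `Γ(G)`: vertices are the non-trivial proper
subgroups of `G`, and two distinct vertices `H`, `K` are adjacent iff `HK = G`
as a setwise product. -/
def comaximalGraph (G : Type*) [Group G] :
    SimpleGraph {H : Subgroup G // H ≠ ⊥ ∧ H ≠ ⊤} where
  Adj H K := H ≠ K ∧ ((H.1 : Set G) * (K.1 : Set G) = Set.univ)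
  symm := by
    constructor
    rintro H K ⟨hne, hmul⟩
    refine ⟨hne.symm, ?_⟩
    have h := congrArg (fun s : Set G => s⁻¹) hmul
    simpa [mul_inv_rev] using h
  loopless := by
    constructor
    rintro H ⟨hne, _⟩
    exact hne rfl

/-- If `G` is a finite solvable group, then any two non-isolated vertices of
`Γ(G)` are joined by a path, i.e. `Γ*(G)` is connected. -/
theorem comaximal_reachable_of_solvable {G : Type*} [Group G] [Finite G]
    [Group.IsSolvable G]
    (H K : {H : Subgroup G // H ≠ ⊥ ∧ H ≠ ⊤})
    (hH : ∃ L, (comaximalGraph G).Adj H L)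
    (hK : ∃ L, (comaximalGraph G).Adj K L) :
    (comaximalGraph G).Reachable H K := by
  have hnt : Nontrivial G := by
    by_contra h
    rw [not_nontrivial_iff_subsingleton] at h
    have : Subsingleton (Subgroup G) := by
      constructor; intro a b
      ext x
      rw [Subsingleton.elim x (1 : G)]
      exact iff_of_true a.one_mem b.one_mem
    exact H.2.2 (Subsingleton.elim _ _)
  have hcomm : commutator G ≠ ⊤ := by
    intro h
    obtain ⟨n, hn⟩ := Group.IsSolvable.solvable (G := G)
    have htop : ∀ n, derivedSeries G n = ⊤ := by
      intro n
      induction n with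
      | zero => rfl
      | succ n ih => rw [derivedSeries_succ, ih]; exact h
    rw [htop n] at hn
    exact top_ne_bot hn
  obtain ⟨M, hM, hcM⟩ := ((eq_top_or_exists_le_coatom (commutator G)).resolve_left hcomm)
  haveI hMnormal : M.Normal := by
    constructor
    intro n hn g
    have hmem : ⁅g, n⁆ ∈ commutator G :=
      Subgroup.commutator_mem_commutator (Subgroup.mem_top g) (Subgroup.mem_top n)
    have h2 : g * n * g⁻¹ = ⁅g, n⁆ * n := by group
    rw [h2]
    exact M.mul_mem (hcM hmem) hn
  have hMbot : M ≠ ⊥ := by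
    intro h
    apply H.2.2
    refine hM.2 _ (show M < H.1 by rw [h]; exact bot_lt_iff_ne_bot.mpr H.2.1)
  -- the product of a subgroup not contained in M with M is everything
  have hprod : ∀ L : Subgroup G, ¬ L ≤ M → (L : Set G) * (M : Set G) = Set.univ := by
    intro L hL
    have hsup : L ⊔ M = ⊤ := by
      refine hM.2 _ (lt_of_le_of_ne le_sup_right ?_)
      intro h
      exact hL (h ▸ le_sup_left)
    calc (L : Set G) * (M : Set G) = ↑(L ⊔ M) := (Subgroup.mul_normal _ _).symm
      _ = Set.univ := by rw [hsup, Subgroup.coe_top]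
  set Mv : {H : Subgroup G // H ≠ ⊥ ∧ H ≠ ⊤} := ⟨M, hMbot, hM.1⟩ with hMv
  have key : ∀ (A : {H : Subgroup G // H ≠ ⊥ ∧ H ≠ ⊤}),
      (∃ L, (comaximalGraph G).Adj A L) → (comaximalGraph G).Reachable A Mv := by
    intro A hA
    by_cases hle : A.1 ≤ M
    · obtain ⟨L, hAL⟩ := hA
      have hLM : ¬ L.1 ≤ M := by
        intro h
        have hsub : (A.1 : Set G) * (L.1 : Set G) ⊆ (M : Set G) := by
          rintro x ⟨a, ha, l, hl, rfl⟩
          exact M.mul_mem (hle ha) (h hl)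
        rw [hAL.2] at hsub
        exact hM.1 ((Subgroup.eq_top_iff' M).mpr fun x => hsub (Set.mem_univ x))
      have hadj : (comaximalGraph G).Adj L Mv := by
        refine ⟨?_, hprod L.1 hLM⟩
        intro h
        exact hLM (by rw [h])
      exact hAL.reachable.trans hadj.reachable
    · have hadj : (comaximalGraph G).Adj A Mv := by
        refine ⟨?_, hprod A.1 hle⟩
        intro h
        exact hle (by rw [h])
      exact hadj.reachable
  exact (key H hH).trans (key K hK).symm
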